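/- arXiv:2108.05581 — 10 statements merged into one kernel-verified Lean document; each statement's English description precedes it below -/
import Mathlib

section
/- Let a_0 < a_1 < ... < a_n be positive integers with gcd 1, and let t be a nonnegative integer. If there exists x ∈ ℤ_{≥0}^{n+1} with a_0·x_0 + a_1·x_1 + ... + a_n·x_n = t, then there exists such a solution x additionally satisfying ∏_{i=1}^{n} (x_i + 1) ≤ a_0. -/
open Finset
private lemma geom_aux (t : ℕ) : ∀ k, (∑ i ∈ range k, t * (t+1)^i) + 1 = (t+1)^k := by
  intro k
  induction k with
  | zero => simp
  | succ k ih =>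
    rw [Finset.sum_range_succ, pow_succ, ← ih]
    ring

private lemma div_unique' (P u v u' v' : ℕ) (h1 : v < P) (h2 : v' < P)
    (h3 : u * P + v = u' * P + v') : u = u' ∧ v = v' := by
  have hu : u = u' := by
    rcases Nat.lt_trichotomy u u' with h | h | h
    · exfalso
      have hc : u * P + v < u' * P + v' := by
        calc u * P + v < u * P + P := by omega
        _ = (u + 1) * P := by ring
        _ ≤ u' * P := Nat.mul_le_mul_right _ h
        _ ≤ u' * P + v' := Nat.le_add_right _ _
      omega
    · exact h
    · exfalso
      have hc : u' * P + v' < u * P + v := by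
        calc u' * P + v' < u' * P + P := by omega
        _ = (u' + 1) * P := by ring
        _ ≤ u * P := Nat.mul_le_mul_right _ h
        _ ≤ u * P + v := Nat.le_add_right _ _
      omega
  subst hu
  exact ⟨rfl, Nat.add_left_cancel h3⟩

private lemma digits_inj (B : ℕ) : ∀ (k : ℕ) (c d : ℕ → ℕ), (∀ i, c i < B) → (∀ i, d i < B) →
    (∑ i ∈ range k, c i * B ^ i) = (∑ i ∈ range k, d i * B ^ i) → ∀ i < k, c i = d i := by
  intro k
  induction k with
  | zero => intro c d _ _ _ i hi; omega
  | succ k ih =>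
    intro c d hc hd h i hi
    have hB : 0 < B := lt_of_le_of_lt (Nat.zero_le _) (hc 0)
    rw [Finset.sum_range_succ', Finset.sum_range_succ'] at h
    simp only [pow_succ, pow_zero, mul_one, ← mul_assoc] at h
    rw [← Finset.sum_mul, ← Finset.sum_mul] at h
    set A := ∑ i ∈ range k, c (i+1) * B ^ i with hA
    set A' := ∑ i ∈ range k, d (i+1) * B ^ i with hA'
    have hud := div_unique' B A (c 0) A' (d 0) (hc 0) (hd 0) h
    have h0 : c 0 = d 0 := hud.2
    have hAA : A = A' := hud.1
    cases i with
    | zero => exact h0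
    | succ j => exact ih (fun i => c (i+1)) (fun i => d (i+1)) (fun i => hc _) (fun i => hd _) hAA j (by omega)



theorem stmt_0 (n : ℕ) (a : Fin (n + 1) → ℕ) (t : ℕ)
    (hmono : StrictMono a) (hpos : 0 < a 0)
    (hgcd : Finset.univ.gcd a = 1)
    (hfeas : ∃ x : Fin (n + 1) → ℕ, ∑ i, a i * x i = t) :
    ∃ x : Fin (n + 1) → ℕ, (∑ i, a i * x i = t) ∧
      ∏ i ∈ Finset.univ.erase 0, (x i + 1) ≤ a 0 := by
  classical
  set B := t + 1 with hB
  set P := B ^ (n + 1) with hP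
  set f : (Fin (n + 1) → ℕ) → ℕ := fun y => ∑ i ∈ univ.erase 0, a i * y i with hf
  set g : (Fin (n + 1) → ℕ) → ℕ := fun y => ∑ i ∈ univ.erase 0, y i * B ^ (i : ℕ) with hg
  set m : (Fin (n + 1) → ℕ) → ℕ := fun y => f y * P + g y with hm
  have hones : ∀ i : Fin (n + 1), 0 < a i :=
    fun i => lt_of_lt_of_le hpos (hmono.monotone (Fin.zero_le i))
  have hsplit : ∀ y : Fin (n + 1) → ℕ, ∑ i, a i * y i = a 0 * y 0 + f y :=
    fun y => (Finset.add_sum_erase univ (fun i => a i * y i) (mem_univ 0)).symm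
  -- minimal solution
  obtain ⟨x0, hx0⟩ := hfeas
  have hex : ∃ v, ∃ x : Fin (n + 1) → ℕ, (∑ i, a i * x i = t) ∧ m x = v := ⟨m x0, x0, hx0, rfl⟩
  obtain ⟨x, hxF, hxm⟩ := Nat.find_spec hex
  have hmin : ∀ z : Fin (n + 1) → ℕ, (∑ i, a i * z i = t) → m x ≤ m z := by
    intro z hz
    have := Nat.find_min' hex (m := m z) ⟨z, hz, rfl⟩
    omega
  -- bounds
  have hxt : ∀ i, x i ≤ t := by
    intro i
    have h1 : a i * x i ≤ ∑ j, a j * x j :=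
      Finset.single_le_sum (f := fun j => a j * x j) (fun j _ => Nat.zero_le _) (mem_univ i)
    have h2 : x i ≤ a i * x i := Nat.le_mul_of_pos_left _ (hones i)
    omega
  have hBpos : 0 < B := by omega
  have gbound : ∀ y : Fin (n + 1) → ℕ, (∀ i, y i ≤ t) → g y < P := by
    intro y hy
    have h1 : g y ≤ ∑ i ∈ Finset.univ.erase (0 : Fin (n + 1)), t * B ^ (i : ℕ) := by
      simp only [hg]
      apply Finset.sum_le_sum
      intro i _
      exact Nat.mul_le_mul_right _ (hy i)
    have h2 : ∑ i ∈ Finset.univ.erase (0 : Fin (n + 1)), t * B ^ (i : ℕ) ≤ ∑ i : Fin (n + 1), t * B ^ (i : ℕ) :=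
      Finset.sum_le_sum_of_subset (Finset.erase_subset _ _)
    have h3 : ∑ i : Fin (n + 1), t * B ^ (i : ℕ) = ∑ i ∈ range (n + 1), t * B ^ i :=
      Fin.sum_univ_eq_sum_range (fun i => t * B ^ i) (n + 1)
    have h4 := geom_aux t (n + 1)
    rw [← hB, ← hP] at h4
    omega
  -- base-B injectivity at the Fin level
  have ginj : ∀ y y' : Fin (n + 1) → ℕ, y 0 = 0 → y' 0 = 0 → (∀ i, y i ≤ t) → (∀ i, y' i ≤ t) →
      g y = g y' → y = y' := by
    intro y y' hy0 hy'0 hyt hy't hgy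
    set c : ℕ → ℕ := fun j => if h : j < n + 1 then y ⟨j, h⟩ else 0 with hc
    set c' : ℕ → ℕ := fun j => if h : j < n + 1 then y' ⟨j, h⟩ else 0 with hc'
    have hceq : ∀ (z : Fin (n + 1) → ℕ), z 0 = 0 →
        (∑ i ∈ range (n + 1), (fun j => if h : j < n + 1 then z ⟨j, h⟩ else 0) i * B ^ i) = g z := by
      intro z hz0
      rw [← Fin.sum_univ_eq_sum_range (fun j => (if h : j < n + 1 then z ⟨j, h⟩ else 0) * B ^ j) (n + 1)]
      have e1 : ∀ i : Fin (n + 1), (if h : (i : ℕ) < n + 1 then z ⟨(i : ℕ), h⟩ else 0) * B ^ (i : ℕ)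
          = z i * B ^ (i : ℕ) := by
        intro i
        rw [dif_pos i.isLt]
      rw [Finset.sum_congr rfl (fun i _ => e1 i)]
      rw [← Finset.add_sum_erase univ (fun i => z i * B ^ (i : ℕ)) (mem_univ 0)]
      simp [hz0, hg]
    have hsum : (∑ i ∈ range (n + 1), c i * B ^ i) = ∑ i ∈ range (n + 1), c' i * B ^ i := by
      rw [hc, hc', hceq y hy0, hceq y' hy'0, hgy]
    have hcb : ∀ i, c i < B := by
      intro i
      rw [hc]
      by_cases h : i < n + 1
      · simp only [dif_pos h]; have := hyt ⟨i, h⟩; omega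
      · simp only [dif_neg h]; omega
    have hc'b : ∀ i, c' i < B := by
      intro i
      rw [hc']
      by_cases h : i < n + 1
      · simp only [dif_pos h]; have := hy't ⟨i, h⟩; omega
      · simp only [dif_neg h]; omega
    have := digits_inj B (n + 1) c c' hcb hc'b hsum
    funext i
    have h2 := this i i.isLt
    rw [hc, hc'] at h2
    simpa [dif_pos i.isLt, Nat.lt_succ_iff.mp i.isLt] using h2
  -- the box
  set D := Fintype.piFinset (fun i : Fin (n + 1) => Finset.range (if i = 0 then 1 else x i + 1)) with hD
  have memD : ∀ y ∈ D, y 0 = 0 ∧ ∀ i, i ≠ 0 → y i ≤ x i := by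
    intro y hy
    rw [hD, Fintype.mem_piFinset] at hy
    constructor
    · have := hy 0; simp at this; omega
    · intro i hi
      have := hy i
      rw [Finset.mem_range, if_neg hi] at this
      omega
  have memDt : ∀ y ∈ D, ∀ i, y i ≤ t := by
    intro y hy i
    by_cases h : i = 0
    · rw [h, (memD y hy).1]; omega
    · exact le_trans ((memD y hy).2 i h) (hxt i)
  -- key exchange argument
  have key : ∀ z z', z ∈ D → z' ∈ D → f z % a 0 = f z' % a 0 → m z' < m z → False := by
    intro z z' hz hz' hzm hlt
    have hzt := memDt z hz
    have hz't := memDt z' hz'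
    have hgzP := gbound z hzt
    have hgz'P := gbound z' hz't
    have hfle : f z' ≤ f z := by
      by_contra hcon
      push_neg at hcon
      have : m z < m z' := by
        calc m z = f z * P + g z := rfl
        _ < f z * P + P := by omega
        _ = (f z + 1) * P := by ring
        _ ≤ f z' * P := Nat.mul_le_mul_right P hcon
        _ ≤ f z' * P + g z' := Nat.le_add_right _ _
        _ = m z' := rfl
      omega
    have hdvd : a 0 ∣ f z - f z' := (Nat.modEq_iff_dvd' hfle).mp hzm.symm
    set d := f z - f z' with hd
    set w : Fin (n + 1) → ℕ := fun i => if i = 0 then x 0 + d / a 0 else x i - z i + z' i with hw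
    have hw0 : w 0 = x 0 + d / a 0 := if_pos rfl
    have hpt : ∀ i : Fin (n + 1), i ≠ 0 → w i + z i = x i + z' i := by
      intro i hi
      have hle : z i ≤ x i := (memD z hz).2 i hi
      rw [hw]
      simp only [if_neg hi]
      omega
    have hfsum : f w + f z = f x + f z' := by
      rw [hf]
      simp only []
      rw [← Finset.sum_add_distrib, ← Finset.sum_add_distrib]
      apply Finset.sum_congr rfl
      intro i hi
      have hi0 : i ≠ 0 := (Finset.mem_erase.mp hi).1
      calc a i * w i + a i * z i = a i * (w i + z i) := by ring
      _ = a i * (x i + z' i) := by rw [hpt i hi0]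
      _ = a i * x i + a i * z' i := by ring
    have hgsum : g w + g z = g x + g z' := by
      rw [hg]
      simp only []
      rw [← Finset.sum_add_distrib, ← Finset.sum_add_distrib]
      apply Finset.sum_congr rfl
      intro i hi
      have hi0 : i ≠ 0 := (Finset.mem_erase.mp hi).1
      calc w i * B ^ (i : ℕ) + z i * B ^ (i : ℕ) = (w i + z i) * B ^ (i : ℕ) := by ring
      _ = (x i + z' i) * B ^ (i : ℕ) := by rw [hpt i hi0]
      _ = x i * B ^ (i : ℕ) + z' i * B ^ (i : ℕ) := by ring
    have hwF : ∑ i, a i * w i = t := by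
      have e1 := hsplit w
      have e2 := hsplit x
      have e3 : a 0 * w 0 = a 0 * x 0 + d := by
        rw [hw0, Nat.mul_add, Nat.mul_div_cancel' hdvd]
      omega
    have hmlt : m w < m x := by
      have h2 : f w * P + f z * P = f x * P + f z' * P := by
        rw [← add_mul, ← add_mul, hfsum]
      have hmw : m w = f w * P + g w := rfl
      have hmz : m z = f z * P + g z := rfl
      have hmx : m x = f x * P + g x := rfl
      have hmz' : m z' = f z' * P + g z' := rfl
      omega
    exact absurd (hmin w hwF) (by omega)
  -- injectivity of residues on the box
  have hinj : Set.InjOn (fun y => f y % a 0) D := by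
    intro y hy y' hy' hmod
    simp only at hmod
    by_contra hne
    have hmne : m y ≠ m y' := by
      intro he
      apply hne
      have hud := div_unique' P (f y) (g y) (f y') (g y') (gbound y (memDt y hy))
        (gbound y' (memDt y' hy')) he
      exact ginj y y' (memD y hy).1 (memD y' hy').1 (memDt y hy) (memDt y' hy') hud.2
    rcases hmne.lt_or_gt with h | h
    · exact absurd (key y' y hy' hy hmod.symm h) (by simp)
    · exact absurd (key y y' hy hy' hmod h) (by simp)
  have hcard : D.card ≤ a 0 := by
    have h1 : D.card ≤ (Finset.range (a 0)).card := by
      apply Finset.card_le_card_of_injOn (fun y => f y % a 0)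
      · intro y _
        exact Finset.mem_range.mpr (Nat.mod_lt _ hpos)
      · exact hinj
    simpa using h1
  have hDcard : D.card = ∏ i ∈ univ.erase 0, (x i + 1) := by
    rw [hD, Fintype.card_piFinset]
    simp only [Finset.card_range]
    rw [← Finset.mul_prod_erase univ _ (mem_univ 0), if_pos rfl, one_mul]
    apply Finset.prod_congr rfl
    intro i hi
    rw [if_neg (Finset.mem_erase.mp hi).1]
  exact ⟨x, hxF, by omega⟩
end

section
/- Let a_0 < a_1 < ... < a_n be positive integers and t a nonnegative integer. If the equation a_0·x_0 + ... + a_n·x_n = t has a nonnegative integer solution, then it has a nonnegative integer solution x whose support (set of indices i with x_i ≠ 0) has cardinality at most log₂(a_0) + 1. -/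
theorem stmt_1 (n : ℕ) (a : Fin (n + 1) → ℕ) (t : ℕ)
    (hmono : StrictMono a) (hpos : 0 < a 0)
    (hfeas : ∃ x : Fin (n + 1) → ℕ, ∑ i, a i * x i = t) :
    ∃ x : Fin (n + 1) → ℕ, (∑ i, a i * x i = t) ∧
      ((Finset.univ.filter fun i => x i ≠ 0).card : ℝ) ≤ Real.logb 2 (a 0) + 1 := by
  classical
  set μ : (Fin (n+1) → ℕ) → ℕ := fun x =>
    2 * (Finset.univ.filter fun i => x i ≠ 0).card + (if x 0 = 0 then 1 else 0) with hμdef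
  have hex : ∃ m, ∃ x : Fin (n+1) → ℕ, (∑ i, a i * x i = t) ∧ μ x = m := by
    obtain ⟨x0, hx0⟩ := hfeas; exact ⟨μ x0, x0, hx0, rfl⟩
  obtain ⟨x, hx, hxm⟩ := Nat.find_spec hex
  have hmin : ∀ y : Fin (n+1) → ℕ, (∑ i, a i * y i = t) → μ x ≤ μ y := by
    intro y hy
    rw [hxm]; exact Nat.find_le ⟨y, hy, rfl⟩
  refine ⟨x, hx, ?_⟩
  set supX := (Finset.univ.filter fun i => x i ≠ 0) with hsupX
  set s := supX.card with hs
  by_contra hcon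
  push_neg at hcon
  have ha1 : (1:ℝ) ≤ (a 0 : ℝ) := by exact_mod_cast hpos
  have hlb0 : 0 ≤ Real.logb 2 (a 0) := Real.logb_nonneg one_lt_two ha1
  have hs2 : 2 ≤ s := by
    have h1 : (1:ℝ) < (s:ℝ) := by linarith
    exact_mod_cast h1
  have hpow : a 0 < 2 ^ (s - 1) := by
    by_contra hc
    push_neg at hc
    have h1 : ((s-1:ℕ):ℝ) ≤ Real.logb 2 (a 0) := by
      rw [Real.le_logb_iff_rpow_le one_lt_two (by positivity), Real.rpow_natCast]
      exact_mod_cast hc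
    have h2 : ((s-1:ℕ):ℝ) = (s:ℝ) - 1 := by
      push_cast [Nat.cast_sub (by omega : 1 ≤ s)]; ring
    linarith
  haveI : NeZero (a 0) := ⟨hpos.ne'⟩
  have hU0' : ∀ W : Finset (Fin (n+1)), W ⊆ supX.erase 0 → (0 : Fin (n+1)) ∉ W := by
    intro W hW h0
    exact (Finset.mem_erase.mp (hW h0)).1 rfl
  -- key descent lemma
  have key : ∀ U V : Finset (Fin (n+1)), U ⊆ supX.erase 0 → V ⊆ supX.erase 0 →
      Disjoint U V → (U ∪ V).Nonempty →
      (∑ i ∈ V, a i * x i) ≤ (∑ i ∈ U, a i * x i) →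
      ((∑ i ∈ U, a i * x i : ℕ) : ZMod (a 0)) = ((∑ i ∈ V, a i * x i : ℕ) : ZMod (a 0)) →
      False := by
    intro U V hUD hVD hdisj hUV hle hmod
    have hU0 : (0 : Fin (n+1)) ∉ U := hU0' U hUD
    have hV0 : (0 : Fin (n+1)) ∉ V := hU0' V hVD
    have hmemx : ∀ i ∈ U ∪ V, 0 < a i * x i := by
      intro i hi
      have hiD : i ∈ supX.erase 0 := by
        rcases Finset.mem_union.mp hi with h | h
        · exact hUD h
        · exact hVD h
      have hxi : x i ≠ 0 := by
        have := Finset.mem_of_mem_erase hiD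
        simpa [hsupX] using (Finset.mem_filter.mp this).2
      have hai : 0 < a i := lt_of_lt_of_le hpos (hmono.monotone (Fin.zero_le i))
      exact Nat.mul_pos hai (Nat.pos_of_ne_zero hxi)
    have hUne : U.Nonempty := by
      rcases hUV with ⟨j, hj⟩
      rcases Finset.mem_union.mp hj with h | h
      · exact ⟨j, h⟩
      · have hV : 0 < ∑ i ∈ V, a i * x i :=
          Finset.sum_pos (fun i hi => hmemx i (Finset.mem_union_right _ hi)) ⟨j, h⟩
        have hU : 0 < ∑ i ∈ U, a i * x i := lt_of_lt_of_le hV hle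
        rcases Finset.eq_empty_or_nonempty U with rfl | h'
        · simp at hU
        · exact h'
    have hmodeq : (∑ i ∈ V, a i * x i) ≡ (∑ i ∈ U, a i * x i) [MOD a 0] :=
      ((ZMod.natCast_eq_natCast_iff _ _ _).mp hmod).symm
    obtain ⟨k, hk⟩ := (Nat.modEq_iff_dvd' hle).mp hmodeq
    have hk' : (∑ i ∈ V, a i * x i) + a 0 * k = ∑ i ∈ U, a i * x i := by omega
    set y : Fin (n+1) → ℕ :=
      fun i => if i = 0 then x 0 + k else if i ∈ U then 0 else if i ∈ V then 2 * x i else x i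
      with hydef
    have hysum : ∑ i, a i * y i = t := by
      have h2 : ∀ i : Fin (n+1), a i * y i + (if i ∈ U then a i * x i else 0)
          = a i * x i + ((if i = 0 then a 0 * k else 0) + (if i ∈ V then a i * x i else 0)) := by
        intro i
        by_cases h0 : i = 0
        · subst h0
          simp only [hydef, if_pos rfl, if_neg hU0, if_neg hV0, if_true]
          ring
        · by_cases hiU : i ∈ U
          · have hiV : i ∉ V := Finset.disjoint_left.mp hdisj hiU
            simp [hydef, h0, hiU, hiV]
          · by_cases hiV : i ∈ V
            · simp only [hydef, if_neg h0, if_neg hiU, if_pos hiV]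
              simp [hiV]
              ring
            · simp [hydef, h0, hiU, hiV]
      have hmain : ∑ i, a i * y i + ∑ i ∈ U, a i * x i
          = t + ∑ i ∈ U, a i * x i := by
        have e1 : ∑ i, a i * y i + ∑ i ∈ U, a i * x i
            = ∑ i : Fin (n+1), (a i * y i + (if i ∈ U then a i * x i else 0)) := by
          rw [Finset.sum_add_distrib, Finset.sum_ite_mem, Finset.univ_inter]
        rw [e1, Finset.sum_congr rfl (fun i _ => h2 i), Finset.sum_add_distrib,
          Finset.sum_add_distrib, hx, Finset.sum_ite_mem, Finset.univ_inter]
        have e2 : (∑ i : Fin (n+1), if i = 0 then a 0 * k else 0) = a 0 * k := by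
          simp
        rw [e2]
        omega
      omega
    have hμle := hmin y hysum
    set supY := (Finset.univ.filter fun i => y i ≠ 0) with hsupY
    have hsubY : supY ⊆ (supX \ U) ∪ {0} := by
      intro i hi
      have hyi : y i ≠ 0 := by
        have := (Finset.mem_filter.mp hi).2
        simpa using this
      by_cases h0 : i = 0
      · exact Finset.mem_union_right _ (by simp [h0])
      · refine Finset.mem_union_left _ (Finset.mem_sdiff.mpr ⟨?_, ?_⟩)
        · refine Finset.mem_filter.mpr ⟨Finset.mem_univ _, ?_⟩
          simp only [hydef, if_neg h0] at hyi
          by_cases hiU : i ∈ U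
          · simp [hiU] at hyi
          · by_cases hiV : i ∈ V
            · simp only [if_neg hiU, if_pos hiV] at hyi
              simpa using fun h => hyi (by simp [h])
            · simpa [hiU, hiV] using hyi
        · intro hiU
          simp [hydef, h0, hiU] at hyi
    have hUX : U ⊆ supX := fun i hi => Finset.mem_of_mem_erase (hUD hi)
    have hcard1 : (supX \ U).card = s - U.card := Finset.card_sdiff_of_subset hUX
    have hU1 : 1 ≤ U.card := Finset.card_pos.mpr hUne
    have hUs : U.card ≤ s := Finset.card_le_card hUX
    have hcardY : supY.card ≤ s - U.card + 1 := by
      calc supY.card ≤ ((supX \ U) ∪ {0}).card := Finset.card_le_card hsubY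
        _ ≤ (supX \ U).card + 1 := by
              refine (Finset.card_union_le _ _).trans ?_; simp
        _ = s - U.card + 1 := by rw [hcard1]
    by_cases hy0 : y 0 = 0
    · have hY : supY ⊆ supX \ U := by
        intro i hi
        rcases Finset.mem_union.mp (hsubY hi) with h | h
        · exact h
        · exfalso
          have h0 : i = 0 := Finset.mem_singleton.mp h
          have := (Finset.mem_filter.mp hi).2
          rw [h0] at this
          exact this hy0
      have hA : supY.card ≤ s - U.card := by
        rw [← hcard1]; exact Finset.card_le_card hY
      by_cases hx0 : x 0 = 0 <;>
        · simp only [hμdef, ← hsupX, ← hsupY, ← hs, hy0, hx0, if_pos, if_true] at hμle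
          omega
    · by_cases hx0 : x 0 = 0
      · simp only [hμdef, ← hsupX, ← hsupY, ← hs, if_pos hx0, if_neg hy0] at hμle
        omega
      · have h0mem : (0 : Fin (n+1)) ∈ supX \ U :=
          Finset.mem_sdiff.mpr ⟨Finset.mem_filter.mpr ⟨Finset.mem_univ _, hx0⟩, hU0⟩
        have hY : supY ⊆ supX \ U := by
          refine hsubY.trans ?_
          rw [Finset.union_subset_iff]
          exact ⟨le_refl _, by simpa using h0mem⟩
        have hA : supY.card ≤ s - U.card := by
          rw [← hcard1]; exact Finset.card_le_card hY
        simp only [hμdef, ← hsupX, ← hsupY, ← hs, if_neg hx0, if_neg hy0] at hμle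
        omega
  -- pigeonhole
  set D := supX.erase 0 with hD
  have hDcard : s - 1 ≤ D.card := Finset.pred_card_le_card_erase
  have hcards : (Finset.univ : Finset (ZMod (a 0))).card < D.powerset.card := by
    rw [Finset.card_univ, ZMod.card, Finset.card_powerset]
    calc a 0 < 2 ^ (s-1) := hpow
      _ ≤ 2 ^ D.card := Nat.pow_le_pow_right (by norm_num) hDcard
  obtain ⟨S₁, hS₁, S₂, hS₂, hne, hfeq⟩ :=
    Finset.exists_ne_map_eq_of_card_lt_of_maps_to hcards
      (f := fun S => ((∑ i ∈ S, a i * x i : ℕ) : ZMod (a 0)))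
      (fun _ _ => Finset.mem_univ _)
  have hS₁D : S₁ ⊆ D := Finset.mem_powerset.mp hS₁
  have hS₂D : S₂ ⊆ D := Finset.mem_powerset.mp hS₂
  set U := S₁ \ S₂ with hUdef
  set V := S₂ \ S₁ with hVdef
  have hUD : U ⊆ D := Finset.sdiff_subset.trans hS₁D
  have hVD : V ⊆ D := Finset.sdiff_subset.trans hS₂D
  have hdisj : Disjoint U V := disjoint_sdiff_sdiff
  have hUV : (U ∪ V).Nonempty := by
    rw [Finset.nonempty_iff_ne_empty]
    intro hemp
    rw [Finset.union_eq_empty] at hemp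
    exact hne (Finset.Subset.antisymm
      (Finset.sdiff_eq_empty_iff_subset.mp hemp.1)
      (Finset.sdiff_eq_empty_iff_subset.mp hemp.2))
  have hfUV : ((∑ i ∈ U, a i * x i : ℕ) : ZMod (a 0)) = ((∑ i ∈ V, a i * x i : ℕ) : ZMod (a 0)) := by
    have e1 : ∑ i ∈ U, a i * x i + ∑ i ∈ S₁ ∩ S₂, a i * x i = ∑ i ∈ S₁, a i * x i := by
      rw [hUdef, ← Finset.sdiff_inter_self_left S₁ S₂]
      exact Finset.sum_sdiff Finset.inter_subset_left
    have e2 : ∑ i ∈ V, a i * x i + ∑ i ∈ S₁ ∩ S₂, a i * x i = ∑ i ∈ S₂, a i * x i := by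
      rw [hVdef, ← Finset.sdiff_inter_self_left S₂ S₁, Finset.inter_comm S₁ S₂]
      exact Finset.sum_sdiff Finset.inter_subset_left
    have h := hfeq
    rw [← e1, ← e2] at h
    rw [Nat.cast_add, Nat.cast_add] at h
    exact add_right_cancel h
  rcases le_total (∑ i ∈ V, a i * x i) (∑ i ∈ U, a i * x i) with hle | hle
  · exact key U V hUD hVD hdisj hUV hle hfUV
  · exact key V U hVD hUD hdisj.symm (by rwa [Finset.union_comm]) hle hfUV.symm
end

section
/- Let a_0, ..., a_n be positive integers with gcd 1 and a_0 smallest. Suppose t ≡ i (mod a_0) and t ≥ a[i], where a[i] is the minimum nonnegative integer congruent to i mod a_0 that is representable as a nonnegative integer combination of a_0, ..., a_n. Then t itself is representable as a nonnegative integer combination of a_0, ..., a_n. -/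
theorem stmt_2 (n : ℕ) (a : Fin (n + 1) → ℕ) (hmono : StrictMono a) (hpos : 0 < a 0)
    (hgcd : Finset.univ.gcd a = 1)
    (i t ai : ℕ) (hi : i < a 0)
    (hmin : IsLeast {m : ℕ | m % a 0 = i ∧ ∃ x : Fin (n + 1) → ℕ, ∑ k, a k * x k = m} ai)
    (ht : t % a 0 = i) (hge : ai ≤ t) :
    ∃ x : Fin (n + 1) → ℕ, ∑ k, a k * x k = t := by
  obtain ⟨⟨hai, x, hx⟩, -⟩ := hmin
  have hmod : ai ≡ t [MOD a 0] := (hai.trans ht.symm : ai % a 0 = t % a 0)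
  obtain ⟨k, hk⟩ := (Nat.modEq_iff_dvd' hge).mp hmod
  refine ⟨fun j => if j = 0 then x 0 + k else x j, ?_⟩
  rw [Fin.sum_univ_succ] at hx ⊢
  have h2 : ∑ j : Fin n, a j.succ * (if j.succ = 0 then x 0 + k else x j.succ)
      = ∑ j : Fin n, a j.succ * x j.succ := by
    apply Finset.sum_congr rfl
    intro j _
    rw [if_neg (Fin.succ_ne_zero j)]
  show a 0 * (if (0 : Fin (n+1)) = 0 then x 0 + k else x 0) +
      ∑ j : Fin n, a j.succ * (if j.succ = 0 then x 0 + k else x j.succ) = t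
  rw [h2, if_pos rfl, Nat.mul_add]
  omega
end

section
/- Let a_0, ..., a_n be positive integers with gcd 1 and a_0 smallest, and let a[i] (for 0 ≤ i < a_0) denote the minimal feasible target value congruent to i mod a_0. Then the Frobenius number (the largest nonfeasible nonnegative integer) equals max_i a[i] − a_0. -/
lemma feas_add {n : ℕ} (a : Fin (n + 1) → ℕ) (m k : ℕ)
    (h : ∃ x : Fin (n + 1) → ℕ, ∑ j, a j * x j = m) :
    ∃ x : Fin (n + 1) → ℕ, ∑ j, a j * x j = m + a 0 * k := by
  obtain ⟨x, hx⟩ := h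
  refine ⟨Function.update x 0 (x 0 + k), ?_⟩
  rw [Fin.sum_univ_succ] at hx ⊢
  simp only [Function.update_self]
  have : ∀ i : Fin n, Function.update x 0 (x 0 + k) i.succ = x i.succ := by
    intro i
    exact Function.update_of_ne (Fin.succ_ne_zero i) _ _
  simp only [this]
  rw [Nat.mul_add]
  omega

theorem stmt_3 (n : ℕ) (a : Fin (n + 1) → ℕ) (hmono : StrictMono a) (hpos : 0 < a 0)
    (hgcd : Finset.univ.gcd a = 1)
    (b : ℕ → ℕ)
    (hb : ∀ i < a 0,
      IsLeast {m : ℕ | m % a 0 = i ∧ ∃ x : Fin (n + 1) → ℕ, ∑ k, a k * x k = m} (b i))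
    (F : ℕ)
    (hF : IsGreatest {t : ℕ | ¬ ∃ x : Fin (n + 1) → ℕ, ∑ k, a k * x k = t} F) :
    F + a 0 = (Finset.range (a 0)).sup b := by
  apply le_antisymm
  · -- F + a0 ≤ b (F % a0) ≤ sup
    have hi : F % a 0 < a 0 := Nat.mod_lt _ hpos
    obtain ⟨⟨hb1, hb2⟩, hleast⟩ := hb (F % a 0) hi
    have hmod : F % a 0 = b (F % a 0) % a 0 := hb1.symm
    have hFnb : F < b (F % a 0) := by
      by_contra h
      push_neg at h
      have hd : a 0 ∣ F - b (F % a 0) :=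
        Nat.dvd_of_mod_eq_zero (Nat.sub_mod_eq_zero_of_mod_eq hmod)
      have : F = b (F % a 0) + a 0 * ((F - b (F % a 0)) / a 0) := by
        obtain ⟨c, hc⟩ := hd
        rw [hc, Nat.mul_div_cancel_left _ hpos]
        omega
      exact hF.1 (this ▸ feas_add a _ _ hb2)
    have hle : F + a 0 ≤ b (F % a 0) := by
      have hd : a 0 ∣ b (F % a 0) - F :=
        Nat.dvd_of_mod_eq_zero (Nat.sub_mod_eq_zero_of_mod_eq hmod.symm)
      have := Nat.le_of_dvd (by omega) hd
      omega
    exact hle.trans (Finset.le_sup (Finset.mem_range.mpr hi))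
  · apply Finset.sup_le
    intro j hj
    rw [Finset.mem_range] at hj
    obtain ⟨⟨hb1, hb2⟩, hleast⟩ := hb j hj
    by_cases hge : a 0 ≤ b j
    · -- b j - a 0 is nonfeasible, so ≤ F
      have hnf : ¬ ∃ x : Fin (n + 1) → ℕ, ∑ k, a k * x k = b j - a 0 := by
        intro hfe
        have hmod : (b j - a 0) % a 0 = j := by
          have : b j = (b j - a 0) + a 0 := by omega
          rw [this, Nat.add_mod_right] at hb1
          exact hb1
        have := hleast ⟨hmod, hfe⟩
        omega
      have := hF.2 hnf
      omega
    · omega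
end

section
/- Let a_0 < ... < a_n be positive integers with gcd 1, and let A^(j) denote the set of feasible target values in the interval ((j−1)a_n, j·a_n]. Then the sequence of cardinalities |A^(j)| is monotonically nondecreasing in j; moreover if |A^(j)| = a_n for some j (i.e., every integer in that interval is feasible), then |A^(k)| = a_n for all k ≥ j. -/
/-- `t` is a nonnegative integer combination of `a 0, …, a n`. -/
def Feasible (n : ℕ) (a : Fin (n + 1) → ℕ) (t : ℕ) : Prop :=
  ∃ x : Fin (n + 1) → ℕ, ∑ i, a i * x i = t

/-- The set of feasible target values in the interval `((j-1)·aₙ, j·aₙ]`. -/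
def feasSet (n : ℕ) (a : Fin (n + 1) → ℕ) (j : ℕ) : Set ℕ :=
  {t : ℕ | t ∈ Set.Ioc ((j - 1) * a (Fin.last n)) (j * a (Fin.last n)) ∧ Feasible n a t}

lemma feasSet_finite (n : ℕ) (a : Fin (n + 1) → ℕ) (j : ℕ) : (feasSet n a j).Finite :=
  (Set.finite_Ioc _ _).subset (fun _ h => h.1)

lemma feas_add_s7 (n : ℕ) (a : Fin (n + 1) → ℕ) {t : ℕ} (h : Feasible n a t) :
    Feasible n a (t + a (Fin.last n)) := by
  obtain ⟨x, hx⟩ := h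
  refine ⟨fun i => x i + if i = Fin.last n then 1 else 0, ?_⟩
  rw [← hx]
  rw [Finset.sum_congr rfl (fun i _ => mul_add (a i) (x i) _), Finset.sum_add_distrib]
  congr 1
  simp [mul_ite]

lemma step (n : ℕ) (a : Fin (n + 1) → ℕ) (j : ℕ) (hj : 1 ≤ j) :
    (feasSet n a j).ncard ≤ (feasSet n a (j + 1)).ncard := by
  have hsub : (fun t => t + a (Fin.last n)) '' feasSet n a j ⊆ feasSet n a (j + 1) := by
    rintro _ ⟨t, ⟨⟨h1, h2⟩, hf⟩, rfl⟩
    refine ⟨⟨?_, ?_⟩, feas_add_s7 n a hf⟩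
    · simp only [Nat.add_sub_cancel]
      have : (j - 1) * a (Fin.last n) + a (Fin.last n) = j * a (Fin.last n) := by
        cases j with
        | zero => omega
        | succ m => simp [Nat.succ_sub_one, add_mul]
      omega
    · show t + a (Fin.last n) ≤ (j + 1) * a (Fin.last n)
      have : (j + 1) * a (Fin.last n) = j * a (Fin.last n) + a (Fin.last n) := by ring
      omega
  calc (feasSet n a j).ncard
      = ((fun t => t + a (Fin.last n)) '' feasSet n a j).ncard :=
        (Set.ncard_image_of_injective _ (add_left_injective _)).symm
    _ ≤ (feasSet n a (j + 1)).ncard :=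
        Set.ncard_le_ncard hsub (feasSet_finite n a (j + 1))

theorem stmt_7 (n : ℕ) (a : Fin (n + 1) → ℕ) (hmono : StrictMono a) (hpos : 0 < a 0)
    (hgcd : Finset.univ.gcd a = 1) :
    (∀ j k : ℕ, 1 ≤ j → j ≤ k → (feasSet n a j).ncard ≤ (feasSet n a k).ncard) ∧
    (∀ j k : ℕ, 1 ≤ j → j ≤ k → (feasSet n a j).ncard = a (Fin.last n) →
      (feasSet n a k).ncard = a (Fin.last n)) := by
  have mono : ∀ j k : ℕ, 1 ≤ j → j ≤ k → (feasSet n a j).ncard ≤ (feasSet n a k).ncard := by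
    intro j k hj hjk
    induction k with
    | zero => omega
    | succ m ih =>
      rcases Nat.lt_or_ge j (m + 1) with h | h
      · exact le_trans (ih (by omega)) (step n a m (by omega))
      · have : j = m + 1 := by omega
        subst this; exact le_rfl
  refine ⟨mono, fun j k hj hjk heq => ?_⟩
  have hub : (feasSet n a k).ncard ≤ a (Fin.last n) := by
    have hsub : feasSet n a k ⊆ Set.Ioc ((k - 1) * a (Fin.last n)) (k * a (Fin.last n)) :=
      fun _ h => h.1
    calc (feasSet n a k).ncard
        ≤ (Set.Ioc ((k - 1) * a (Fin.last n)) (k * a (Fin.last n))).ncard :=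
          Set.ncard_le_ncard hsub (Set.finite_Ioc _ _)
      _ ≤ a (Fin.last n) := by
          rw [Set.ncard_eq_toFinset_card', Set.toFinset_Ioc, Nat.card_Ioc]
          have : (k - 1) * a (Fin.last n) + a (Fin.last n) ≥ k * a (Fin.last n) := by
            cases k with
            | zero => simp
            | succ m => simp [Nat.succ_sub_one, add_mul]
          omega
  have := mono j k hj hjk
  omega
end

section
/- Let x ∈ ℤ_{≥0}^{n+1} be a solution of a_0 x_0 + ... + a_n x_n = t with t ≤ (i+j)·a_n for positive integers i, j, and with x ≠ 0. Then there exist x', x'' ∈ ℤ_{≥0}^{n+1} with x' + x'' + e_k = x for some standard unit vector e_k, such that a·x' ≤ i·a_n and a·x'' ≤ j·a_n (where a·y denotes a_0 y_0 + ... + a_n y_n). -/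
theorem stmt_8 (n : ℕ) (a : Fin (n + 1) → ℕ) (hmono : StrictMono a) (hpos : 0 < a 0)
    (i j t : ℕ) (hi : 1 ≤ i) (hj : 1 ≤ j)
    (x : Fin (n + 1) → ℕ) (hx : ∑ k, a k * x k = t)
    (ht : t ≤ (i + j) * a (Fin.last n)) (hx0 : x ≠ 0) :
    ∃ (x' x'' : Fin (n + 1) → ℕ) (k : Fin (n + 1)),
      x' + x'' + Pi.single k 1 = x ∧
      (∑ m, a m * x' m) ≤ i * a (Fin.last n) ∧
      (∑ m, a m * x'' m) ≤ j * a (Fin.last n) := by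
  classical
  have hsingle : ∀ k : Fin (n + 1), ∑ m, a m * (Pi.single k 1 : Fin (n+1) → ℕ) m = a k := by
    intro k
    simp [Pi.single_apply, mul_ite, Finset.sum_ite_eq']
  have hsplit : ∀ (x' x'' : Fin (n + 1) → ℕ) (k : Fin (n + 1)),
      x' + x'' + Pi.single k 1 = x →
      (∑ m, a m * x' m) + (∑ m, a m * x'' m) + a k = t := by
    intro x' x'' k heq
    rw [← hx, ← heq]
    simp [mul_add, Finset.sum_add_distrib, hsingle k]
  obtain ⟨x', hx'F, hmax⟩ := Finset.exists_max_image
    ((Finset.Iic x).filter fun y => ∑ m, a m * y m ≤ i * a (Fin.last n))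
    (fun y => ∑ m, a m * y m)
    ⟨0, by simp⟩
  simp only [Finset.mem_filter, Finset.mem_Iic] at hx'F
  obtain ⟨hle, hA⟩ := hx'F
  have halast : ∀ k : Fin (n + 1), a k ≤ a (Fin.last n) := fun k =>
    hmono.monotone (Fin.le_last k)
  by_cases hxx : x' = x
  · subst hxx
    obtain ⟨k, hk⟩ := Function.ne_iff.mp hx0
    have hk' : 0 < x' k := Nat.pos_of_ne_zero hk
    refine ⟨fun m => x' m - (Pi.single k 1 : Fin (n+1) → ℕ) m, 0, k, ?_, ?_, ?_⟩
    · funext m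
      by_cases h : m = k
      · subst h; simp [Pi.single_apply]; omega
      · simp [h, Pi.single_apply]
    · calc (∑ m, a m * (x' m - (Pi.single k 1 : Fin (n+1) → ℕ) m)) ≤ ∑ m, a m * x' m := by
            apply Finset.sum_le_sum
            intro m _
            exact Nat.mul_le_mul_left _ (Nat.sub_le _ _)
        _ ≤ i * a (Fin.last n) := hA
    · simp
  · have hne : ∃ k, x' k < x k := by
      by_contra h
      push_neg at h
      exact hxx (le_antisymm hle h)
    obtain ⟨k, hk⟩ := hne
    have hkle : x' + (Pi.single k 1 : Fin (n+1) → ℕ) ≤ x := by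
      intro m
      have h2 : x' m ≤ x m := hle m
      by_cases h : m = k
      · subst h; simp [Pi.single_apply]; omega
      · simp [h, Pi.single_apply]; omega
    have hbig : ¬ (∑ m, a m * (x' + (Pi.single k 1 : Fin (n+1) → ℕ)) m) ≤ i * a (Fin.last n) := by
      intro hcon
      have := hmax (x' + (Pi.single k 1 : Fin (n+1) → ℕ))
        (Finset.mem_filter.mpr ⟨Finset.mem_Iic.mpr hkle, hcon⟩)
      have hsum : (∑ m, a m * (x' + (Pi.single k 1 : Fin (n+1) → ℕ)) m)
          = (∑ m, a m * x' m) + a k := by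
        simp [mul_add, Finset.sum_add_distrib, hsingle k]
      have hak : 0 < a k := lt_of_lt_of_le hpos (hmono.monotone (Fin.zero_le k))
      simp only [hsum] at this
      omega
    have hsum : (∑ m, a m * (x' + (Pi.single k 1 : Fin (n+1) → ℕ)) m)
        = (∑ m, a m * x' m) + a k := by
      simp [mul_add, Finset.sum_add_distrib, hsingle k]
    rw [hsum] at hbig
    push_neg at hbig
    refine ⟨x', fun m => x m - x' m - (Pi.single k 1 : Fin (n+1) → ℕ) m, k, ?_, hA, ?_⟩
    · funext m
      have h2 : x' m ≤ x m := hle m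
      by_cases h : m = k
      · subst h; simp [Pi.single_apply]; omega
      · simp [h, Pi.single_apply]; omega
    · have heq : x' + (fun m => x m - x' m - (Pi.single k 1 : Fin (n+1) → ℕ) m) + Pi.single k 1 = x := by
        funext m
        have h2 : x' m ≤ x m := hle m
        by_cases h : m = k
        · subst h; simp [Pi.single_apply]; omega
        · simp [h, Pi.single_apply]; omega
      have := hsplit x' (fun m => x m - x' m - (Pi.single k 1 : Fin (n+1) → ℕ) m) k heq
      have hak : a k ≤ a (Fin.last n) := halast k
      have ht' : t ≤ i * a (Fin.last n) + j * a (Fin.last n) := by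
        rw [add_mul] at ht; exact ht
      beta_reduce at this ⊢
      omega
end

section
/- Let a_0 < a_1 < ... < a_n be positive integers with gcd 1. Define V = { 2^j · a_i : 1 ≤ i ≤ n, 0 ≤ j ≤ log₂(a_0) }. Then every minimal feasible target value t_k (the minimum nonnegative integer congruent to k mod a_0 that is a nonnegative integer combination of a_0, ..., a_n) can be written as a sum of at most ⌊log₂ a_0⌋ elements of V (with repetition allowed). -/
-- expList: list of exponents of set bits
def expList (m : ℕ) : List ℕ :=
  if h : m = 0 then []
  else (if m % 2 = 1 then [0] else []) ++ (expList (m / 2)).map (· + 1)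
decreasing_by exact Nat.div_lt_self (Nat.pos_of_ne_zero h) one_lt_two

lemma sum_map_pow_succ (l : List ℕ) :
    (l.map (fun j => 2 ^ (j + 1))).sum = 2 * (l.map (fun j => 2 ^ j)).sum := by
  induction l with
  | nil => simp
  | cons hd tl ih =>
    simp only [List.map_cons, List.sum_cons]
    rw [ih]; ring

lemma expList_sum (m : ℕ) : ((expList m).map (fun j => 2 ^ j)).sum = m := by
  induction m using Nat.strong_induction_on with
  | _ m ih =>
    rw [expList]
    by_cases h : m = 0
    · simp [h]
    · have ihh := ih (m / 2) (Nat.div_lt_self (Nat.pos_of_ne_zero h) one_lt_two)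
      have hdm := Nat.div_add_mod m 2
      simp only [h, dite_false, List.map_append, List.sum_append, List.map_map]
      have h2 : ((expList (m / 2)).map ((fun j => 2 ^ j) ∘ (· + 1))).sum
          = 2 * ((expList (m / 2)).map (fun j => 2 ^ j)).sum := by
        rw [← sum_map_pow_succ]; rfl
      rw [h2, ihh]
      rcases Nat.mod_two_eq_zero_or_one m with hp | hp <;> simp [hp] <;> omega

lemma expList_length (m : ℕ) : 2 ^ (expList m).length ≤ m + 1 := by
  induction m using Nat.strong_induction_on with
  | _ m ih =>
    rw [expList]
    by_cases h : m = 0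
    · simp [h]
    · have ihh := ih (m / 2) (Nat.div_lt_self (Nat.pos_of_ne_zero h) one_lt_two)
      have hdm := Nat.div_add_mod m 2
      simp only [h, dite_false, List.length_append, List.length_map]
      rcases Nat.mod_two_eq_zero_or_one m with hp | hp <;>
        simp only [hp, if_true, if_false, List.length_cons, List.length_nil,
          one_ne_zero, Nat.zero_ne_one] <;>
      · rw [pow_add]
        have : (2:ℕ) ^ (expList (m/2)).length ≤ m / 2 + 1 := ihh
        simp
        omega

lemma expList_mem (m : ℕ) : ∀ j ∈ expList m, 2 ^ j ≤ m := by
  induction m using Nat.strong_induction_on with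
  | _ m ih =>
    rw [expList]
    by_cases h : m = 0
    · simp [h]
    · have ihh := ih (m / 2) (Nat.div_lt_self (Nat.pos_of_ne_zero h) one_lt_two)
      have hdm := Nat.div_add_mod m 2
      simp only [h, dite_false]
      intro j hj
      rcases List.mem_append.mp hj with hj | hj
      · have : j = 0 := by
          rcases Nat.mod_two_eq_zero_or_one m with hp | hp <;> simp [hp] at hj
          exact hj
        subst this; simpa using Nat.one_le_iff_ne_zero.mpr h
      · obtain ⟨j', hj', rfl⟩ := List.mem_map.mp hj
        have := ihh j' hj'
        rw [pow_succ]
        omega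

lemma sum_map_mul (c : ℕ) (l : List ℕ) :
    (l.map (fun j => 2 ^ j * c)).sum = ((l.map (fun j => 2 ^ j)).sum) * c := by
  induction l with
  | nil => simp
  | cons hd tl ih => simp [ih, add_mul]

lemma digit_inj (B : ℕ) : ∀ (m : ℕ) (u v : Fin m → ℕ), (∀ i, u i < B) → (∀ i, v i < B) →
    (∑ i, u i * B ^ (i : ℕ)) = (∑ i, v i * B ^ (i : ℕ)) → u = v := by
  intro m
  induction m with
  | zero => intro u v _ _ _; funext i; exact absurd i.2 (by omega)
  | succ m ihm =>
    intro u v hu hv hsum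
    have hrw : ∀ w : Fin (m+1) → ℕ,
        ∑ i, w i * B ^ (i : ℕ) = w 0 + B * ∑ i : Fin m, w i.succ * B ^ (i : ℕ) := by
      intro w
      rw [Fin.sum_univ_succ, Finset.mul_sum]
      simp only [Fin.val_zero, pow_zero, mul_one, Fin.val_succ]
      congr 1
      refine Finset.sum_congr rfl fun i _ => ?_
      ring
    rw [hrw u, hrw v] at hsum
    have hB : 0 < B := lt_of_le_of_lt (Nat.zero_le _) (hu 0)
    have h0 : u 0 = v 0 := by
      have h1 := congrArg (· % B) hsum
      simpa [Nat.add_mul_mod_self_left, Nat.mod_eq_of_lt (hu 0), Nat.mod_eq_of_lt (hv 0)] using h1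
    have htail : (fun i : Fin m => u i.succ) = (fun i : Fin m => v i.succ) := by
      apply ihm _ _ (fun i => hu i.succ) (fun i => hv i.succ)
      have : ∑ i : Fin m, u i.succ * B ^ (i:ℕ) = ∑ i : Fin m, v i.succ * B ^ (i:ℕ) := by
        have := hsum
        rw [h0] at this
        have := Nat.add_left_cancel this
        exact Nat.eq_of_mul_eq_mul_left hB this
      exact this
    funext i
    rcases Fin.eq_zero_or_eq_succ i with rfl | ⟨j, rfl⟩
    · exact h0
    · exact congrFun htail j

lemma sum_sub_add {m : ℕ} (A Bf C : Fin m → ℕ) (h : ∀ i, Bf i ≤ A i) :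
    ∑ i, (A i - Bf i + C i) = ∑ i, A i - ∑ i, Bf i + ∑ i, C i := by
  have h1 : ∑ i, (A i - Bf i + C i) = ∑ i, (A i - Bf i) + ∑ i, C i :=
    Finset.sum_add_distrib
  have h2 : ∑ i, (A i - Bf i) + ∑ i, Bf i = ∑ i, A i := by
    rw [← Finset.sum_add_distrib]
    exact Finset.sum_congr rfl fun i _ => Nat.sub_add_cancel (h i)
  have h3 : ∑ i, Bf i ≤ ∑ i, A i := Finset.sum_le_sum fun i _ => h i
  omega

lemma sum_bind' {α : Type*} (l : List α) (f : α → List ℕ) :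
    (l.flatMap f).sum = (l.map fun a => (f a).sum).sum := by
  induction l with
  | nil => simp
  | cons hd tl ih => simp [ih]

theorem stmt_11 (n : ℕ) (a : Fin (n + 1) → ℕ) (hmono : StrictMono a) (hpos : 0 < a 0)
    (hgcd : Finset.univ.gcd a = 1)
    (k tk : ℕ) (hk : k < a 0)
    (hmin : IsLeast {t : ℕ | t % a 0 = k ∧ ∃ x : Fin (n + 1) → ℕ, ∑ i, a i * x i = t} tk) :
    ∃ l : List ℕ,
      (∀ v ∈ l, ∃ i : Fin (n + 1), i ≠ 0 ∧ ∃ j ≤ Nat.log 2 (a 0), v = 2 ^ j * a i) ∧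
      l.length ≤ Nat.log 2 (a 0) ∧ l.sum = tk := by
  obtain ⟨⟨hmod, x₀, hx₀⟩, hlb⟩ := hmin
  have hapos : ∀ i, 0 < a i := fun i => lt_of_lt_of_le hpos (hmono.monotone (Fin.zero_le i))
  -- Step 1: a representation with x 0 = 0
  have hrep0 : ∃ x : Fin (n + 1) → ℕ, x 0 = 0 ∧ ∑ i, a i * x i = tk := by
    set y := Function.update x₀ 0 0 with hy
    have hy0 : y 0 = 0 := Function.update_self _ _ _
    have hsplit : ∑ i, a i * x₀ i = a 0 * x₀ 0 + ∑ i, a i * y i := by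
      have e1 : ∑ i, a i * x₀ i
          = a 0 * x₀ 0 + ∑ i ∈ Finset.univ.erase 0, a i * x₀ i :=
        (Finset.add_sum_erase _ _ (Finset.mem_univ 0)).symm
      have e2 : ∑ i, a i * y i = ∑ i ∈ Finset.univ.erase 0, a i * x₀ i := by
        rw [← Finset.add_sum_erase _ (fun i => a i * y i) (Finset.mem_univ 0), hy0]
        simp only [mul_zero, zero_add]
        exact Finset.sum_congr rfl fun i hi =>
          by rw [hy, Function.update_of_ne (Finset.ne_of_mem_erase hi)]
      rw [e1, e2]
    set t' := ∑ i, a i * y i with ht'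
    have htk : tk = a 0 * x₀ 0 + t' := by rw [← hx₀, hsplit]
    have ht'mod : t' % a 0 = k := by
      rw [← hmod, htk, Nat.mul_add_mod]
    have hle := hlb ⟨ht'mod, y, rfl⟩
    exact ⟨y, hy0, by omega⟩
  -- Step 2: minimal-weight representation
  set B := tk + 1 with hB
  set S : Set ℕ := {w | ∃ x : Fin (n + 1) → ℕ,
    x 0 = 0 ∧ ∑ i, a i * x i = tk ∧ w = ∑ i, x i * B ^ (i : ℕ)} with hS
  obtain ⟨x', hx'0, hx'sum⟩ := hrep0
  have hSne : S.Nonempty := ⟨_, x', hx'0, hx'sum, rfl⟩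
  obtain ⟨x, hx0, hxsum, hW⟩ := Nat.sInf_mem hSne
  have hxle : ∀ i, x i ≤ tk := by
    intro i
    calc x i ≤ a i * x i := Nat.le_mul_of_pos_left _ (hapos i)
    _ ≤ tk := by
      rw [← hxsum]
      exact Finset.single_le_sum (f := fun j => a j * x j) (fun j _ => Nat.zero_le _)
        (Finset.mem_univ i)
  -- Step 3: product bound
  have hprod : ∏ i, (x i + 1) ≤ a 0 := by
    by_contra hlt
    push_neg at hlt
    have hnz : NeZero (a 0) := ⟨hpos.ne'⟩
    have hcard : Fintype.card (ZMod (a 0)) < Fintype.card (∀ i, Fin (x i + 1)) := by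
      rw [ZMod.card, Fintype.card_pi]
      simpa using hlt
    obtain ⟨y, z, hyz, hg⟩ := Fintype.exists_ne_map_eq_of_card_lt
      (fun y : ∀ i, Fin (x i + 1) => ((∑ i, a i * (y i : ℕ) : ℕ) : ZMod (a 0))) hcard
    set u : Fin (n + 1) → ℕ := fun i => (y i : ℕ) - min (y i : ℕ) (z i : ℕ) with hu
    set v : Fin (n + 1) → ℕ := fun i => (z i : ℕ) - min (y i : ℕ) (z i : ℕ) with hv
    have hyx : ∀ i, (y i : ℕ) ≤ x i := fun i => Nat.lt_succ_iff.mp (y i).2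
    have hzx : ∀ i, (z i : ℕ) ≤ x i := fun i => Nat.lt_succ_iff.mp (z i).2
    have hux : ∀ i, u i ≤ x i := fun i => le_trans (Nat.sub_le _ _) (hyx i)
    have hvx : ∀ i, v i ≤ x i := fun i => le_trans (Nat.sub_le _ _) (hzx i)
    have huv_ne : u ≠ v := by
      intro h
      apply hyz
      funext i
      have := congrFun h i
      simp only [hu, hv] at this
      have hmin1 : min (y i : ℕ) (z i : ℕ) ≤ (y i : ℕ) := min_le_left _ _
      have hmin2 : min (y i : ℕ) (z i : ℕ) ≤ (z i : ℕ) := min_le_right _ _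
      exact Fin.ext (by omega)
    -- congruence
    have hgmod : (∑ i, a i * (y i : ℕ)) ≡ (∑ i, a i * (z i : ℕ)) [MOD a 0] :=
      (ZMod.natCast_eq_natCast_iff _ _ _).mp hg
    have hysplit : ∑ i, a i * (y i : ℕ)
        = ∑ i, a i * u i + ∑ i, a i * (min (y i : ℕ) (z i : ℕ)) := by
      rw [← Finset.sum_add_distrib]
      refine Finset.sum_congr rfl fun i _ => ?_
      rw [← Nat.mul_add]
      congr 1
      simp only [hu]
      omega
    have hzsplit : ∑ i, a i * (z i : ℕ)
        = ∑ i, a i * v i + ∑ i, a i * (min (y i : ℕ) (z i : ℕ)) := by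
      rw [← Finset.sum_add_distrib]
      refine Finset.sum_congr rfl fun i _ => ?_
      rw [← Nat.mul_add]
      congr 1
      simp only [hv]
      omega
    have hmodeq : (∑ i, a i * u i) ≡ (∑ i, a i * v i) [MOD a 0] := by
      have := hgmod
      rw [hysplit, hzsplit] at this
      exact this.add_right_cancel' _
    have hSle : ∀ p : Fin (n + 1) → ℕ, (∀ i, p i ≤ x i) → ∑ i, a i * p i ≤ tk := by
      intro p hp
      rw [← hxsum]
      exact Finset.sum_le_sum fun i _ => Nat.mul_le_mul_left _ (hp i)
    -- general combination fact
    have hcomb : ∀ p q : Fin (n + 1) → ℕ, (∀ i, p i ≤ x i) → (∀ i, q i ≤ x i) →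
        ((∑ i, a i * p i) ≡ (∑ i, a i * q i) [MOD a 0]) →
        tk ≤ tk - (∑ i, a i * p i) + (∑ i, a i * q i) := by
      intro p q hp hq hpq
      set xc : Fin (n + 1) → ℕ := fun i => x i - p i + q i with hxc
      have hxcsum : ∑ i, a i * xc i = tk - (∑ i, a i * p i) + (∑ i, a i * q i) := by
        have e : ∀ i, a i * xc i = a i * x i - a i * p i + a i * q i := by
          intro i
          simp only [hxc]
          obtain ⟨d, hd⟩ := Nat.le.dest (hp i)
          rw [← hd]
          rw [Nat.add_sub_cancel_left, Nat.mul_add, Nat.mul_add, Nat.add_sub_cancel_left]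
        rw [Finset.sum_congr rfl fun i _ => e i,
          sum_sub_add _ _ _ (fun i => Nat.mul_le_mul_left _ (hp i)), hxsum]
      have hmodt : (tk - (∑ i, a i * p i) + (∑ i, a i * q i)) % a 0 = k := by
        have h1 : (tk - (∑ i, a i * p i) + (∑ i, a i * q i))
            ≡ (tk - (∑ i, a i * p i) + (∑ i, a i * p i)) [MOD a 0] :=
          Nat.ModEq.add_left _ hpq.symm
        have h2 : tk - (∑ i, a i * p i) + (∑ i, a i * p i) = tk :=
          Nat.sub_add_cancel (hSle p hp)
        rw [Nat.ModEq] at h1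
        rw [h1, h2, hmod]
      exact hlb ⟨hmodt, xc, hxcsum⟩
    have h1 := hcomb u v hux hvx hmodeq
    have h2 := hcomb v u hvx hux hmodeq.symm
    have hSu := hSle u hux
    have hSv := hSle v hvx
    have hSuv : ∑ i, a i * u i = ∑ i, a i * v i := by omega
    -- now the weight argument
    have hwcomb : ∀ p q : Fin (n + 1) → ℕ, (∀ i, p i ≤ x i) → (∀ i, q i ≤ x i) →
        (∑ i, a i * p i = ∑ i, a i * q i) →
        sInf S ≤ sInf S - (∑ i, p i * B ^ (i : ℕ)) + (∑ i, q i * B ^ (i : ℕ)) := by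
      intro p q hp hq hpq
      set xc : Fin (n + 1) → ℕ := fun i => x i - p i + q i with hxc
      have hxc0 : xc 0 = 0 := by
        have hpu : p 0 ≤ x 0 := hp 0
        have hqu : q 0 ≤ x 0 := hq 0
        simp only [hxc]
        omega
      have hxcsum : ∑ i, a i * xc i = tk := by
        have e : ∀ i, a i * xc i = a i * x i - a i * p i + a i * q i := by
          intro i
          simp only [hxc]
          obtain ⟨d, hd⟩ := Nat.le.dest (hp i)
          rw [← hd]
          rw [Nat.add_sub_cancel_left, Nat.mul_add, Nat.mul_add, Nat.add_sub_cancel_left]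
        rw [Finset.sum_congr rfl fun i _ => e i,
          sum_sub_add _ _ _ (fun i => Nat.mul_le_mul_left _ (hp i)), hxsum, hpq]
        have := hSle q hq
        omega
      have hwsum : ∑ i, xc i * B ^ (i : ℕ)
          = ∑ i, x i * B ^ (i : ℕ) - (∑ i, p i * B ^ (i : ℕ)) + (∑ i, q i * B ^ (i : ℕ)) := by
        have e : ∀ i, xc i * B ^ (i : ℕ)
            = x i * B ^ (i : ℕ) - p i * B ^ (i : ℕ) + q i * B ^ (i : ℕ) := by
          intro i
          simp only [hxc]
          obtain ⟨d, hd⟩ := Nat.le.dest (hp i)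
          rw [← hd]
          rw [Nat.add_sub_cancel_left, Nat.add_mul, Nat.add_mul, Nat.add_sub_cancel_left]
        rw [Finset.sum_congr rfl fun i _ => e i,
          sum_sub_add _ _ _ (fun i => Nat.mul_le_mul_right _ (hp i))]
      have hmem : (∑ i, xc i * B ^ (i : ℕ)) ∈ S := ⟨xc, hxc0, hxcsum, rfl⟩
      have := Nat.sInf_le hmem
      rw [hwsum, ← hW] at this
      exact this
    have hwu_le : ∑ i, u i * B ^ (i : ℕ) ≤ sInf S := by
      rw [hW]
      exact Finset.sum_le_sum fun i _ => Nat.mul_le_mul_right _ (hux i)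
    have hwv_le : ∑ i, v i * B ^ (i : ℕ) ≤ sInf S := by
      rw [hW]
      exact Finset.sum_le_sum fun i _ => Nat.mul_le_mul_right _ (hvx i)
    have hw1 := hwcomb u v hux hvx hSuv
    have hw2 := hwcomb v u hvx hux hSuv.symm
    have hweq : ∑ i, u i * B ^ (i : ℕ) = ∑ i, v i * B ^ (i : ℕ) := by omega
    exact huv_ne (digit_inj B (n + 1) u v
      (fun i => by have := hux i; have := hxle i; omega)
      (fun i => by have := hvx i; have := hxle i; omega) hweq)
  -- Step 4: build the list
  refine ⟨(List.finRange (n + 1)).flatMap fun i => (expList (x i)).map fun j => 2 ^ j * a i,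
    ?_, ?_, ?_⟩
  · intro w hw
    obtain ⟨i, _, hw⟩ := List.mem_flatMap.mp hw
    obtain ⟨j, hj, rfl⟩ := List.mem_map.mp hw
    have h2j : 2 ^ j ≤ x i := expList_mem _ j hj
    have hxia : x i + 1 ≤ a 0 := by
      calc x i + 1 ≤ ∏ m, (x m + 1) :=
        Finset.single_le_prod' (fun m _ => Nat.le_add_left _ _) (Finset.mem_univ i)
      _ ≤ a 0 := hprod
    refine ⟨i, ?_, j, ?_, rfl⟩
    · intro h
      rw [h, hx0] at h2j
      have := pow_pos (by norm_num : (0:ℕ) < 2) j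
      omega
    · rw [Nat.le_log_iff_pow_le one_lt_two hpos.ne']
      omega
  · rw [List.length_flatMap]
    have hlen : ((List.finRange (n + 1)).map
        (fun i => ((expList (x i)).map fun j => 2 ^ j * a i).length)).sum
        = ∑ i, (expList (x i)).length := by
      rw [Fin.sum_univ_def]
      congr 1
      refine List.map_congr_left fun i _ => ?_
      rw [List.length_map]
    rw [hlen]
    rw [Nat.le_log_iff_pow_le one_lt_two hpos.ne']
    calc 2 ^ ∑ i, (expList (x i)).length = ∏ i, 2 ^ (expList (x i)).length := by
          rw [Finset.prod_pow_eq_pow_sum]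
    _ ≤ ∏ i, (x i + 1) := Finset.prod_le_prod' fun i _ => expList_length (x i)
    _ ≤ a 0 := hprod
  · have hsum : ((List.finRange (n + 1)).map
        (fun i => ((expList (x i)).map fun j => 2 ^ j * a i).sum)).sum
        = ∑ i, a i * x i := by
      rw [Fin.sum_univ_def]
      congr 1
      refine List.map_congr_left fun i _ => ?_
      rw [sum_map_mul, expList_sum, Nat.mul_comm]
    rw [sum_bind', hsum, hxsum]
end

section
/- Let (a[i])_{i=0}^{n−1} be a sequence of integers and define b of length 2n by b[i] = a[i mod n]. Then there exist indices i, j ∈ {0,...,2n−1} with i+j ≤ 2n−1 and b[i] + b[j] < b[i+j] if and only if there exist indices i, j ∈ {0,...,n−1} with a[i] + a[j] < a[(i+j) mod n]. -/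
theorem stmt_12 (n : ℕ) (hn : 1 ≤ n) (a : ℕ → ℤ) (b : ℕ → ℤ)
    (hb : ∀ i < 2 * n, b i = a (i % n)) :
    (∃ i j : ℕ, i < 2 * n ∧ j < 2 * n ∧ i + j ≤ 2 * n - 1 ∧ b i + b j < b (i + j)) ↔
    (∃ i j : ℕ, i < n ∧ j < n ∧ a i + a j < a ((i + j) % n)) := by
  constructor
  · rintro ⟨i, j, hi, hj, hij, hlt⟩
    refine ⟨i % n, j % n, Nat.mod_lt _ hn, Nat.mod_lt _ hn, ?_⟩
    have h1 : (i % n + j % n) % n = (i + j) % n := by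
      conv_rhs => rw [Nat.add_mod]
    rw [h1, ← hb i hi, ← hb j hj, ← hb (i + j) (lt_of_le_of_lt hij (by omega))]
    exact hlt
  · rintro ⟨i, j, hi, hj, hlt⟩
    refine ⟨i, j, by omega, by omega, by omega, ?_⟩
    rw [hb i (by omega), hb j (by omega), hb (i + j) (by omega),
      Nat.mod_eq_of_lt hi, Nat.mod_eq_of_lt hj]
    exact hlt
end

section
/- Given a sequence a[1], ..., a[n−1] of positive integers, define a_0 = 2n, M = 2(max_i a[i] + n), items a_i = a_0·a[i] + 2i and ā_i = a_0·(M − a[i]) − 2i − 1 for 1 ≤ i ≤ n−1, and target t = a_0(M−1) − 1. Then any nonnegative integer combination of {a_0} ∪ {a_i} ∪ {ā_i} equal to t must use exactly one item from {ā_1, ..., ā_{n−1}}. -/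
theorem stmt_13 (n : ℕ) (hn : 2 ≤ n) (a : ℕ → ℕ)
    (hpos : ∀ i ∈ Finset.Icc 1 (n - 1), 0 < a i)
    (M : ℕ) (hM : M = 2 * ((Finset.Icc 1 (n - 1)).sup a + n))
    (x0 : ℕ) (x y : ℕ → ℕ)
    (heq :
      x0 * (2 * n) +
        (∑ i ∈ Finset.Icc 1 (n - 1), x i * (2 * n * a i + 2 * i)) +
        (∑ i ∈ Finset.Icc 1 (n - 1), y i * (2 * n * (M - a i) - 2 * i - 1)) =
      2 * n * (M - 1) - 1) :
    ∑ i ∈ Finset.Icc 1 (n - 1), y i = 1 := by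
  set A := (Finset.Icc 1 (n - 1)).sup a with hAdef
  have hmem1 : 1 ∈ Finset.Icc 1 (n - 1) := by
    rw [Finset.mem_Icc]; omega
  have hA1 : 1 ≤ A := le_trans (hpos 1 hmem1) (Finset.le_sup hmem1)
  -- key per-term facts
  have hQ3 : n * 3 ≤ n * (A + 2 * n) := Nat.mul_le_mul_left n (by omega)
  have hterm : ∀ i ∈ Finset.Icc 1 (n - 1),
      2 * n * (M - a i) - 2 * i - 1 = 2 * (n * (M - a i) - i - 1) + 1 := by
    intro i hi
    have hi2 : i ≤ n - 1 := (Finset.mem_Icc.mp hi).2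
    have hle : a i ≤ A := Finset.le_sup hi
    have hQle : n * (A + 2 * n) ≤ n * (M - a i) :=
      Nat.mul_le_mul_left n (by omega)
    have e1 : 2 * n * (M - a i) = 2 * (n * (M - a i)) := by ring
    omega
  have hL : ∀ i ∈ Finset.Icc 1 (n - 1),
      2 * (n * (A + 2 * n)) + 1 - 2 * n ≤ 2 * n * (M - a i) - 2 * i - 1 := by
    intro i hi
    have hi2 : i ≤ n - 1 := (Finset.mem_Icc.mp hi).2
    have hle : a i ≤ A := Finset.le_sup hi
    have hQle : n * (A + 2 * n) ≤ n * (M - a i) :=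
      Nat.mul_le_mul_left n (by omega)
    have e1 : 2 * n * (M - a i) = 2 * (n * (M - a i)) := by ring
    omega
  -- rewrite the sums into parity-explicit form
  have hysum : (∑ i ∈ Finset.Icc 1 (n - 1), y i * (2 * n * (M - a i) - 2 * i - 1))
      = 2 * (∑ i ∈ Finset.Icc 1 (n - 1), y i * (n * (M - a i) - i - 1))
        + ∑ i ∈ Finset.Icc 1 (n - 1), y i := by
    rw [Finset.mul_sum, ← Finset.sum_add_distrib]
    refine Finset.sum_congr rfl fun i hi => ?_
    rw [hterm i hi]; ring
  have hxsum : (∑ i ∈ Finset.Icc 1 (n - 1), x i * (2 * n * a i + 2 * i))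
      = 2 * (∑ i ∈ Finset.Icc 1 (n - 1), x i * (n * a i + i)) := by
    rw [Finset.mul_sum]
    refine Finset.sum_congr rfl fun i hi => ?_
    ring
  have hx0 : x0 * (2 * n) = 2 * (x0 * n) := by ring
  have hrhs : 2 * n * (M - 1) = 2 * (n * (M - 1)) := by ring
  have hR1 : 1 ≤ n * (M - 1) := by
    have : 1 ≤ M - 1 := by omega
    calc 1 = 1 * 1 := by ring
    _ ≤ n * (M - 1) := Nat.mul_le_mul (by omega) this
  -- parity of S
  set S := ∑ i ∈ Finset.Icc 1 (n - 1), y i with hSdef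
  have hpar : S % 2 = 1 := by
    rw [hysum, hxsum, hx0, hrhs] at heq
    omega
  -- suppose S ≥ 2, derive contradiction
  by_contra hne
  have hS2 : 2 ≤ S := by omega
  set Ysum := ∑ i ∈ Finset.Icc 1 (n - 1), y i * (2 * n * (M - a i) - 2 * i - 1)
    with hYdef
  have hYle : Ysum ≤ 2 * n * (M - 1) - 1 :=
    heq ▸ Nat.le_add_left Ysum _
  set L := 2 * (n * (A + 2 * n)) + 1 - 2 * n with hLdef
  have hYge : S * L ≤ Ysum := by
    rw [hSdef, Finset.sum_mul]
    exact Finset.sum_le_sum fun i hi => Nat.mul_le_mul_left (y i) (hL i hi)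
  have h2L : 2 * L ≤ S * L := Nat.mul_le_mul_right L hS2
  have hfin : 2 * L ≤ 2 * n * (M - 1) - 1 :=
    le_trans h2L (le_trans hYge hYle)
  -- arithmetic contradiction
  have hMsucc : M - 1 + 1 = M := by omega
  have h6 : n * M = n * (M - 1) + n := by
    conv_lhs => rw [← hMsucc]
    rw [Nat.mul_add, Nat.mul_one]
  have h7 : 2 * (n * (A + 2 * n)) = n * M + 2 * (n * n) := by
    rw [hM]; ring
  have hnsq : 2 * n ≤ n * n := Nat.mul_le_mul_right n hn
  rw [hrhs] at hfin
  omega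
end

section
/- Let a_0 < a_1 < ... < a_n be positive integers with gcd 1, all at most t, and let R be the smallest integer with R·a_0 > t. Add the items a_{n+i} = R·a_0 + (2^i mod a_0) for 0 ≤ i ≤ ⌊log₂ a_0⌋. Then every integer t' > 3t·log₂ t is representable as a nonnegative integer combination of the extended item set; in particular the Frobenius number of the extended instance is at most 3t·log₂ t. -/
lemma bitsum (m : ℕ) : ∀ K, ∑ i ∈ Finset.range K, (m / 2^i % 2) * 2^i = m % 2^K := by
  intro K
  induction K with
  | zero => simp [Nat.mod_one]
  | succ K ih =>
    rw [Finset.sum_range_succ, ih, pow_succ, Nat.mod_mul]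
    ring

theorem stmt_16 (n : ℕ) (a : Fin (n + 1) → ℕ) (t : ℕ)
    (hmono : StrictMono a) (hpos : 0 < a 0) (hgcd : Finset.univ.gcd a = 1)
    (hle : ∀ i, a i ≤ t)
    (R : ℕ) (hR : t < R * a 0) (hRmin : ∀ R' : ℕ, t < R' * a 0 → R ≤ R')
    (t' : ℕ) (ht' : (3 * t : ℝ) * Real.logb 2 t < t') :
    ∃ (x : Fin (n + 1) → ℕ) (y : ℕ → ℕ),
      (∑ i, a i * x i) +
        (∑ i ∈ Finset.range (Nat.log 2 (a 0) + 1), y i * (R * a 0 + 2 ^ i % a 0)) =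
      t' := by
  set a0 := a 0 with ha0
  set K := Nat.log 2 a0 + 1 with hK
  set m := t' % a0 with hm
  set y : ℕ → ℕ := fun i => m / 2^i % 2 with hy
  set S := ∑ i ∈ Finset.range K, y i * (R * a0 + 2 ^ i % a0) with hS
  have hma : m < a0 := Nat.mod_lt _ hpos
  have hmK : m < 2 ^ K := lt_of_lt_of_le hma (Nat.lt_pow_succ_log_self one_lt_two a0).le
  have hbits : ∑ i ∈ Finset.range K, y i * 2 ^ i = m := by
    rw [hy]; simp only []
    rw [bitsum m K, Nat.mod_eq_of_lt hmK]
  -- congruence : S ≡ m [MOD a0]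
  have hcong : S ≡ m [MOD a0] := by
    have : (S : ZMod a0) = (m : ZMod a0) := by
      rw [hS, ← hbits]
      push_cast
      refine Finset.sum_congr rfl fun i _ => ?_
      rw [ZMod.natCast_mod, ZMod.natCast_self]
      push_cast
      ring
    exact (ZMod.natCast_eq_natCast_iff _ _ _).mp this
  -- size bound : S ≤ t'
  have hSle : S ≤ t' := by
    rcases Nat.eq_zero_or_pos m with hm0 | hm1
    · have : S = 0 := by
        refine Finset.sum_eq_zero fun i _ => ?_
        simp [hy, hm0]
      omega
    -- m ≥ 1, so a0 ≥ 2, so n ≥ 1, so a0 + 1 ≤ t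
    · have ha2 : 2 ≤ a0 := by omega
      have hat : a0 + 1 ≤ t := by
        rcases n with _ | n'
        · exfalso
          have hdvd0 : a0 ∣ Finset.univ.gcd a :=
            Finset.dvd_gcd fun i _ => by
              rw [Fin.fin_one_eq_zero i]
          rw [hgcd] at hdvd0
          have h1 : a0 = 1 := Nat.dvd_one.mp hdvd0
          omega
        · have h01 : a 0 < a 1 := by
            apply hmono
            rw [Fin.lt_def]
            simp [Fin.val_one]
          have := hle 1
          omega
      set L := Nat.log 2 m + 1 with hL
      have hmL : m < 2 ^ L := Nat.lt_pow_succ_log_self one_lt_two m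
      have hpow : 2 ^ (Nat.log 2 m) ≤ m := Nat.pow_log_le_self 2 (by omega)
      -- popcount sum bound
      have hpcount : ∑ i ∈ Finset.range K, y i ≤ L := by
        calc ∑ i ∈ Finset.range K, y i
            ≤ ∑ i ∈ Finset.range K, (if i < L then 1 else 0) := by
              refine Finset.sum_le_sum fun i _ => ?_
              by_cases h : i < L
              · simp only [h, if_pos]
                exact Nat.le_of_lt_succ (Nat.mod_lt _ (by norm_num))
              · have hz : m / 2 ^ i = 0 := by
                  apply Nat.div_eq_of_lt
                  calc m < 2 ^ L := hmL
                  _ ≤ 2 ^ i := Nat.pow_le_pow_right (by norm_num) (by omega)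
                simp [h, hy, hz]
          _ = (((Finset.range K).filter (· < L)).card : ℕ) := by
              rw [Finset.sum_boole]
              norm_num
          _ ≤ L := by
              have hsub : (Finset.range K).filter (· < L) ⊆ Finset.range L := by
                intro i hi
                simp only [Finset.mem_filter, Finset.mem_range] at *
                omega
              simpa using Finset.card_le_card hsub
      -- R * a0 ≤ t + a0
      have hRa : R * a0 ≤ t + a0 := by
        have hR1 : 1 ≤ R := by
          rcases Nat.eq_zero_or_pos R with h | h
          · exfalso; rw [h, Nat.zero_mul] at hR; omega
          · exact h
        obtain ⟨R', rfl⟩ : ∃ R', R = R' + 1 := ⟨R - 1, by omega⟩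
        have hR't : R' * a0 ≤ t := by
          by_contra h
          have := hRmin R' (by omega)
          omega
        nlinarith
      have hS1 : S ≤ L * (t + a0) + m := by
        have hstep : S ≤ (∑ i ∈ Finset.range K, y i) * (R * a0) + m := by
          rw [hS, ← hbits, Finset.sum_mul, ← Finset.sum_add_distrib]
          refine Finset.sum_le_sum fun i _ => ?_
          have h2 : 2 ^ i % a0 ≤ 2 ^ i := Nat.mod_le _ _
          nlinarith
        calc S ≤ (∑ i ∈ Finset.range K, y i) * (R * a0) + m := hstep
          _ ≤ L * (t + a0) + m := by
              have := Nat.mul_le_mul hpcount hRa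
              omega
      have hS2 : S ≤ (2 * L + 1) * t := by
        have h1 : L * (t + a0) ≤ L * (2 * t) := Nat.mul_le_mul_left L (by omega)
        nlinarith
      -- real inequality: 2L+1 ≤ 3 logb 2 t
      have hut : 2 ^ (Nat.log 2 m) + 2 ≤ t := by omega
      have hnat : 2 ^ (2 * L + 1) ≤ t ^ 3 := by
        calc 2 ^ (2 * L + 1) = 8 * (2 ^ (Nat.log 2 m)) ^ 2 := by
              rw [hL]; ring
          _ ≤ (2 ^ (Nat.log 2 m) + 2) ^ 3 := by
              have h1 : 1 ≤ 2 ^ (Nat.log 2 m) := Nat.one_le_two_pow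
              nlinarith
          _ ≤ t ^ 3 := Nat.pow_le_pow_left hut 3
      have hreal : (2 * L + 1 : ℝ) ≤ 3 * Real.logb 2 t := by
        have h1 : ((2 : ℝ)) ^ (2 * L + 1) ≤ (t : ℝ) ^ 3 := by exact_mod_cast hnat
        have h2 : Real.logb 2 ((2:ℝ) ^ (2 * L + 1)) ≤ Real.logb 2 ((t:ℝ) ^ 3) :=
          Real.logb_le_logb_of_le one_lt_two (by positivity) h1
        rw [Real.logb_pow, Real.logb_pow, Real.logb_self_eq_one one_lt_two] at h2
        push_cast at h2 ⊢
        linarith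
      have hfin : (S : ℝ) < t' := by
        calc (S : ℝ) ≤ (((2 * L + 1) * t : ℕ) : ℝ) := by exact_mod_cast hS2
          _ = (2 * L + 1 : ℝ) * t := by push_cast; ring
          _ ≤ (3 * Real.logb 2 t) * t := by
              have ht0 : (0:ℝ) ≤ t := by positivity
              nlinarith
          _ = (3 * t : ℝ) * Real.logb 2 t := by ring
          _ < t' := ht'
      exact_mod_cast hfin.le
  -- conclude
  have hdvd : a0 ∣ t' - S := by
    have h2 : t' ≡ m [MOD a0] := (Nat.mod_modEq t' a0).symm
    have h1 : S ≡ t' [MOD a0] := hcong.trans h2.symm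
    exact (Nat.modEq_iff_dvd' hSle).mp h1
  refine ⟨fun i => if i = 0 then (t' - S) / a0 else 0, y, ?_⟩
  have hsum : ∑ i, a i * (if i = 0 then (t' - S) / a0 else 0) = a0 * ((t' - S) / a0) := by
    rw [Finset.sum_eq_single 0]
    · simp
      exact Or.inl rfl
    · intro b _ hb; simp [hb]
    · intro h; simp at h
  rw [hsum, Nat.mul_div_cancel' hdvd]
  omega
end
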